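/- A generalized numerical semigroup S ⊆ ℕ^d is quasi-irreducible if and only if for every pseudo-Frobenius gap P ∈ PF(S), either P ∈ FA(S) or 2P ∈ FA(S). -/

import Mathlib

open Finset

/-- A generalized numerical semigroup (GNS) in `ℕ^d`: contains `0`, is closed under
componentwise addition, and has finite complement. -/
def IsGNS {d : ℕ} (S : Set (Fin d → ℕ)) : Prop :=
  (0 : Fin d → ℕ) ∈ S ∧ (∀ a ∈ S, ∀ b ∈ S, a + b ∈ S) ∧ Sᶜ.Finite

/-- A relaxed monomial order on `ℕ^d`: a (strict) total order `r` such that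
`r v w → r v (w + u)` and `0` is below every nonzero element. -/
def IsRMO {d : ℕ} (r : (Fin d → ℕ) → (Fin d → ℕ) → Prop) : Prop :=
  IsStrictTotalOrder (Fin d → ℕ) r ∧
  (∀ v w u : Fin d → ℕ, r v w → r v (w + u)) ∧
  (∀ v : Fin d → ℕ, v ≠ 0 → r 0 v)

/-- `F` is the Frobenius gap of `S` with respect to the order `r`, i.e. the
`r`-maximum of the gap set `ℕ^d \ S`. -/
def IsFrobGapWrt {d : ℕ} (S : Set (Fin d → ℕ))
    (r : (Fin d → ℕ) → (Fin d → ℕ) → Prop) (F : Fin d → ℕ) : Prop :=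
  F ∉ S ∧ ∀ x, x ∉ S → x ≠ F → r x F

/-- `F` is a Frobenius allowable gap of `S`: it is the Frobenius gap with respect to
some relaxed monomial order. -/
def FrobAllowable {d : ℕ} (S : Set (Fin d → ℕ)) (F : Fin d → ℕ) : Prop :=
  ∃ r, IsRMO r ∧ IsFrobGapWrt S r F

/-- `F` is a maximal gap of `S` with respect to the natural (componentwise)
partial order on `ℕ^d`. -/
def MaxGap {d : ℕ} (S : Set (Fin d → ℕ)) (F : Fin d → ℕ) : Prop :=
  F ∉ S ∧ ∀ x, x ∉ S → F ≤ x → x = F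

/-- The set of Frobenius allowable gaps of `S`, i.e. the maximal elements of the gap
set under the natural partial order. -/
def FA {d : ℕ} (S : Set (Fin d → ℕ)) : Set (Fin d → ℕ) := {F | MaxGap S F}

/-- The set of pseudo-Frobenius gaps of `S`. -/
def PF {d : ℕ} (S : Set (Fin d → ℕ)) : Set (Fin d → ℕ) :=
  {P | P ∉ S ∧ ∀ s ∈ S, s ≠ 0 → P + s ∈ S}

/-- `S` is quasi-irreducible: for every gap `x`, either `2x` is Frobenius allowable or
`F - x ∈ S` for some Frobenius allowable gap `F`. -/
def QuasiIrreducible {d : ℕ} (S : Set (Fin d → ℕ)) : Prop :=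
  ∀ x, x ∉ S → (x + x ∈ FA S ∨ ∃ F ∈ FA S, ∃ s ∈ S, x + s = F)

/-- `S` is a Frobenius GNS with Frobenius gap `F`: the gap set has `F` as its unique
maximal element under the natural partial order. -/
def IsFrobeniusGNS {d : ℕ} (S : Set (Fin d → ℕ)) (F : Fin d → ℕ) : Prop :=
  IsGNS S ∧ MaxGap S F ∧ ∀ x, MaxGap S x → x = F

/-- `‖F‖ = ∏ i (F^(i) + 1)`, the number of lattice points in the box `[0, F]`. -/
def normF {d : ℕ} (F : Fin d → ℕ) : ℕ := ∏ i, (F i + 1)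

/-- `N(F)`: the number of Frobenius GNS in `ℕ^d` with Frobenius gap `F`. -/
noncomputable def NF {d : ℕ} (F : Fin d → ℕ) : ℕ :=
  {S : Set (Fin d → ℕ) | IsFrobeniusGNS S F}.ncard

/-- A GNS is quasi-irreducible iff every pseudo-Frobenius gap `P` satisfies
`P ∈ FA(S)` or `2P ∈ FA(S)`. -/
theorem quasiIrreducible_iff_pf {d : ℕ} (S : Set (Fin d → ℕ)) (hS : IsGNS S) :
    QuasiIrreducible S ↔ ∀ P ∈ PF S, P ∈ FA S ∨ P + P ∈ FA S := by
  constructor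
  · intro hQI P hP
    obtain ⟨hPn, hPs⟩ := hP
    rcases hQI P hPn with h | ⟨F, hF, s, hs, hPsF⟩
    · exact Or.inr h
    · rcases eq_or_ne s 0 with rfl | hs0
      · left
        have : P = F := by simpa using hPsF
        exact this ▸ hF
      · exact absurd (hPsF ▸ hPs s hs hs0) hF.1
  · intro h x hx
    set B : Set (Fin d → ℕ) := {z | z ∉ S ∧ ∃ s ∈ S, x + s = z} with hB
    have hBfin : B.Finite := hS.2.2.subset (fun z hz => hz.1)
    have hxB : x ∈ B := ⟨hx, 0, hS.1, by simp⟩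
    obtain ⟨y, hyB, hymax⟩ : ∃ a ∈ B, ∀ a' ∈ B, id a ≤ id a' → id a = id a' := by
      obtain ⟨y, hyB, hy⟩ := hBfin.exists_maximalFor id B (Set.nonempty_of_mem hxB)
      exact ⟨y, hyB, fun a' ha' hle => le_antisymm hle (hy ha' hle)⟩
    obtain ⟨hyn, s0, hs0, hxs0⟩ := hyB
    have hyPF : y ∈ PF S := by
      refine ⟨hyn, fun t ht ht0 => ?_⟩
      by_contra hyt
      have hytB : y + t ∈ B := ⟨hyt, s0 + t, hS.2.1 s0 hs0 t ht, by rw [← add_assoc, hxs0]⟩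
      have hle : y ≤ y + t := le_add_of_nonneg_right (by positivity)
      have := hymax (y + t) hytB hle
      simp only [id] at this
      exact ht0 (by simpa using this.symm)
    rcases h y hyPF with hyFA | hyyFA
    · exact Or.inr ⟨y, hyFA, s0, hs0, hxs0⟩
    · rcases eq_or_ne s0 0 with rfl | hs00
      · left
        have : y = x := by simpa using hxs0.symm
        rw [this] at hyyFA
        exact hyyFA
      · refine Or.inr ⟨y + y, hyyFA, y + s0, hyPF.2 s0 hs0 hs00, ?_⟩
        rw [← hxs0]
        abel
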